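/- arXiv:2408.15894 — 2 statements merged into one kernel-verified Lean document; each statement's English description precedes it below -/
import Mathlib

section
/- The partition of the nodes of a finite directed graph induced by the automorphism group (orbit partition) refines the partition induced by covering symmetry (isomorphism of both input and output trees), which in turn refines the partition induced by fibration symmetry (isomorphism of input trees). -/
/-- A finite directed multigraph: a node type, an edge type, and source/target maps. -/
structure FinDigraph where
  V : Type
  E : Type
  [finV : Finite V]
  [finE : Finite E]
  src : E → V
  tgt : E → V

attribute [instance] FinDigraph.finV FinDigraph.finE

namespace FinDigraph

/-- The far endpoint of a (reversed) path ending at `u`: the list `[e_k, …, e_1]`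
represents the directed path `src e_k → ⋯ → tgt e_1 = u`. -/
def farEnd (G : FinDigraph) (u : G.V) : List G.E → G.V
  | [] => u
  | e :: _ => G.src e

/-- `l = [e_k, …, e_1]` is a directed path of `G` ending at `u`. -/
def IsInPath (G : FinDigraph) (u : G.V) : List G.E → Prop
  | [] => True
  | e :: es => IsInPath G u es ∧ G.tgt e = G.farEnd u es

/-- The nodes of the input tree of `u`: all directed paths ending at `u`. -/
def InPath (G : FinDigraph) (u : G.V) : Type := {l : List G.E // G.IsInPath u l}

/-- The root of the input tree of `u` (the empty path). -/
def root (G : FinDigraph) (u : G.V) : G.InPath u := ⟨[], trivial⟩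

/-- The parent of a path in the input tree (drop the farthest edge); the root is its own parent. -/
def parent (G : FinDigraph) (u : G.V) : G.InPath u → G.InPath u
  | ⟨[], h⟩ => ⟨[], h⟩
  | ⟨_ :: es, h⟩ => ⟨es, h.1⟩

/-- Isomorphism of input trees: a bijection of paths preserving root, depth and parent. -/
def InTreeIso (G : FinDigraph) (u : G.V) (H : FinDigraph) (v : H.V) : Prop :=
  ∃ F : G.InPath u ≃ H.InPath v,
    F (G.root u) = H.root v ∧
    (∀ p, ((F p).1).length = (p.1).length) ∧
    (∀ p, F (G.parent u p) = H.parent v (F p))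

/-- The reverse graph (all edges flipped). -/
def rev (G : FinDigraph) : FinDigraph :=
  { V := G.V, E := G.E, src := G.tgt, tgt := G.src }

/-- Isomorphism of output trees = isomorphism of input trees in the reverse graphs. -/
def OutTreeIso (G : FinDigraph) (u : G.V) (H : FinDigraph) (v : H.V) : Prop :=
  InTreeIso (rev G) u (rev H) v

/-- A homomorphism of directed multigraphs. -/
structure Hom (G H : FinDigraph) where
  onV : G.V → H.V
  onE : G.E → H.E
  map_src : ∀ e, H.src (onE e) = onV (G.src e)
  map_tgt : ∀ e, H.tgt (onE e) = onV (G.tgt e)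

/-- Isomorphism of directed multigraphs. -/
def IsIso (G H : FinDigraph) : Prop :=
  ∃ φ : Hom G H, Function.Bijective φ.onV ∧ Function.Bijective φ.onE

/-- Fibration equivalence of nodes: isomorphic input trees. -/
def fibEquiv (G : FinDigraph) (u v : G.V) : Prop := InTreeIso G u G v

/-- Covering equivalence of nodes: isomorphic input trees and isomorphic output trees. -/
def covEquiv (G : FinDigraph) (u v : G.V) : Prop :=
  InTreeIso G u G v ∧ OutTreeIso G u G v

/-- Orbit equivalence: some automorphism maps one node to the other. -/
def orbitEquiv (G : FinDigraph) (u v : G.V) : Prop :=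
  ∃ φ : Hom G G, Function.Bijective φ.onV ∧ Function.Bijective φ.onE ∧ φ.onV u = v

theorem inTreeIso_refl (G : FinDigraph) (u : G.V) : InTreeIso G u G u :=
  ⟨Equiv.refl _, rfl, fun _ => rfl, fun _ => rfl⟩

theorem inTreeIso_symm {G : FinDigraph} {u : G.V} {H : FinDigraph} {v : H.V}
    (h : InTreeIso G u H v) : InTreeIso H v G u := by
  obtain ⟨F, hroot, hlen, hpar⟩ := h
  refine ⟨F.symm, ?_, ?_, ?_⟩
  · rw [← hroot, Equiv.symm_apply_apply]
  · intro p; rw [← hlen (F.symm p), Equiv.apply_symm_apply]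
  · intro p
    apply F.injective
    rw [Equiv.apply_symm_apply, hpar (F.symm p), Equiv.apply_symm_apply]

theorem inTreeIso_trans {G : FinDigraph} {u : G.V} {H : FinDigraph} {v : H.V}
    {K : FinDigraph} {w : K.V}
    (h₁ : InTreeIso G u H v) (h₂ : InTreeIso H v K w) : InTreeIso G u K w := by
  obtain ⟨F, fr, fl, fp⟩ := h₁
  obtain ⟨F', gr, gl, gp⟩ := h₂
  refine ⟨F.trans F', ?_, ?_, ?_⟩
  · simp [Equiv.trans_apply, fr, gr]
  · intro p; simp [Equiv.trans_apply, gl, fl]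
  · intro p; simp [Equiv.trans_apply, fp, gp]

/-- The setoid of fibration equivalence (isomorphism of input trees). -/
def fibSetoid (G : FinDigraph) : Setoid G.V :=
  ⟨fibEquiv G, ⟨fun u => inTreeIso_refl G u, inTreeIso_symm, inTreeIso_trans⟩⟩

/-- The minimal fibration base of `G`: nodes are the fibers (input-tree isomorphism
classes), and the edges from a fiber `C'` into a fiber `C` are the edges of `G` from
nodes of `C'` into the chosen representative of `C`. -/
def base (G : FinDigraph) : FinDigraph where
  V := Quotient (fibSetoid G)
  E := {e : G.E // G.tgt e = (Quotient.mk (fibSetoid G) (G.tgt e)).out}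
  src e := Quotient.mk (fibSetoid G) (G.src e.1)
  tgt e := Quotient.mk (fibSetoid G) (G.tgt e.1)

/-- The fiber of a node, as a node of the minimal base. -/
def fibClass (G : FinDigraph) (u : G.V) : (base G).V := Quotient.mk (fibSetoid G) u

/-- A partition (given as an equivalence relation) is balanced if any two equivalent
nodes receive the same number of edges from each class. -/
def IsBalanced (G : FinDigraph) (r : G.V → G.V → Prop) : Prop :=
  Equivalence r ∧ ∀ u v, r u v → ∀ w : G.V,
    Nat.card {e : G.E // G.tgt e = u ∧ r (G.src e) w} =
    Nat.card {e : G.E // G.tgt e = v ∧ r (G.src e) w}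

/-- The multiset of states of the in-neighbors of `u` (with edge multiplicity). -/
noncomputable def inStates (G : FinDigraph) {S : Type} (x : G.V → S) (u : G.V) :
    Multiset S :=
  letI := Fintype.ofFinite G.E
  letI := Classical.decEq G.V
  (Finset.univ.filter (fun e => G.tgt e = u)).val.map fun e => x (G.src e)

/-- Reverse of a homomorphism. -/
def Hom.rev {G H : FinDigraph} (φ : Hom G H) : Hom G.rev H.rev :=
  ⟨φ.onV, φ.onE, φ.map_tgt, φ.map_src⟩

lemma farEnd_map {G H : FinDigraph} (φ : Hom G H) (u : G.V) (l : List G.E) :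
    H.farEnd (φ.onV u) (l.map φ.onE) = φ.onV (G.farEnd u l) := by
  cases l with
  | nil => rfl
  | cons e es => simp [farEnd, φ.map_src]

lemma isInPath_map {G H : FinDigraph} (φ : Hom G H) (u : G.V) (l : List G.E)
    (h : G.IsInPath u l) : H.IsInPath (φ.onV u) (l.map φ.onE) := by
  induction l with
  | nil => trivial
  | cons e es ih =>
    exact ⟨ih h.1, by rw [φ.map_tgt, h.2, farEnd_map]⟩

/-- Inverse of a bijective homomorphism. -/
noncomputable def Hom.inv {G H : FinDigraph} (φ : Hom G H)
    (h1 : Function.Bijective φ.onV) (h2 : Function.Bijective φ.onE) : Hom H G where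
  onV := (Equiv.ofBijective _ h1).symm
  onE := (Equiv.ofBijective _ h2).symm
  map_src e := by
    apply h1.injective
    show φ.onV _ = φ.onV _
    rw [← φ.map_src]
    show H.src ((Equiv.ofBijective φ.onE h2) ((Equiv.ofBijective φ.onE h2).symm e)) =
      (Equiv.ofBijective φ.onV h1) ((Equiv.ofBijective φ.onV h1).symm (H.src e))
    rw [Equiv.apply_symm_apply, Equiv.apply_symm_apply]
  map_tgt e := by
    apply h1.injective
    show φ.onV _ = φ.onV _
    rw [← φ.map_tgt]
    show H.tgt ((Equiv.ofBijective φ.onE h2) ((Equiv.ofBijective φ.onE h2).symm e)) =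
      (Equiv.ofBijective φ.onV h1) ((Equiv.ofBijective φ.onV h1).symm (H.tgt e))
    rw [Equiv.apply_symm_apply, Equiv.apply_symm_apply]

lemma inTreeIso_of_iso {G H : FinDigraph} (φ : Hom G H)
    (h1 : Function.Bijective φ.onV) (h2 : Function.Bijective φ.onE)
    (u : G.V) (v : H.V) (huv : φ.onV u = v) : InTreeIso G u H v := by
  classical
  subst huv
  let ψ := φ.inv h1 h2
  have hψφ : ∀ e, ψ.onE (φ.onE e) = e := fun e =>
    (Equiv.ofBijective _ h2).symm_apply_apply e
  have hφψ : ∀ e, φ.onE (ψ.onE e) = e := fun e =>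
    (Equiv.ofBijective _ h2).apply_symm_apply e
  have hψu : ψ.onV (φ.onV u) = u := (Equiv.ofBijective _ h1).symm_apply_apply u
  refine ⟨⟨fun p => ⟨p.1.map φ.onE, isInPath_map φ u p.1 p.2⟩,
      fun p => ⟨p.1.map ψ.onE, by
        have := isInPath_map ψ (φ.onV u) p.1 p.2; rwa [hψu] at this⟩,
      ?_, ?_⟩, rfl, fun p => List.length_map φ.onE, fun p => ?_⟩
  · intro p
    apply Subtype.ext
    show List.map ψ.onE (List.map φ.onE p.1) = p.1
    rw [List.map_map, show ψ.onE ∘ φ.onE = id from funext hψφ, List.map_id]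
  · intro p
    apply Subtype.ext
    show List.map φ.onE (List.map ψ.onE p.1) = p.1
    rw [List.map_map, show φ.onE ∘ ψ.onE = id from funext hφψ, List.map_id]
  · rcases p with ⟨l, hl⟩
    cases l with
    | nil => rfl
    | cons e es => rfl

end FinDigraph

/-- the orbit partition refines the covering partition, which refines the
fibration partition. -/
theorem orbit_refines_cov_refines_fib (G : FinDigraph) (u v : G.V) :
    (FinDigraph.orbitEquiv G u v → FinDigraph.covEquiv G u v) ∧
    (FinDigraph.covEquiv G u v → FinDigraph.fibEquiv G u v) := by
  constructor
  · rintro ⟨φ, h1, h2, huv⟩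
    exact ⟨FinDigraph.inTreeIso_of_iso φ h1 h2 u v huv,
      FinDigraph.inTreeIso_of_iso φ.rev h1 h2 u v huv⟩
  · exact fun h => h.1
end

section
/- In a graph neural network whose layer update is h_u^{(k)} = γ(h_u^{(k-1)}, f({{h_w^{(k-1)} : w ∈ N(−,u)}})) with the same functions γ, f at each node, if two nodes u, v of the input graph G are in the same fiber (have isomorphic input trees) and initial features are constant on fibers, then h_u^{(k)} = h_v^{(k)} for all k. -/
namespace FinDigraph

variable {G H : FinDigraph} {u : G.V} {v : H.V}

theorem farEnd_append (e : G.E) (l : List G.E) :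
    G.farEnd u (l ++ [e]) = G.farEnd (G.src e) l := by cases l <;> rfl

theorem isInPath_append (e : G.E) (he : G.tgt e = u) (l : List G.E) :
    G.IsInPath u (l ++ [e]) ↔ G.IsInPath (G.src e) l := by
  induction l with
  | nil => simp [IsInPath, farEnd, he]
  | cons e₀ l ih => simp [IsInPath, ih, farEnd_append]

theorem parent_val (q : G.InPath u) : (G.parent u q).1 = q.1.tail := by
  obtain ⟨l, h⟩ := q; cases l <;> rfl

/-- The path of length one given by an edge into `u`. -/
def single (e : G.E) (he : G.tgt e = u) : G.InPath u := ⟨[e], ⟨trivial, he⟩⟩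

theorem endsWith_map (F : G.InPath u ≃ H.InPath v)
    (hlen : ∀ p, ((F p).1).length = (p.1).length)
    (hpar : ∀ p, F (G.parent u p) = H.parent v (F p))
    {e : G.E} {e' : H.E} (he : G.tgt e = u) (he' : H.tgt e' = v)
    (hsingle : F (single e he) = single e' he') :
    ∀ (l : List G.E) (q : G.InPath u), q.1 = l ++ [e] →
      ∃ l', (F q).1 = l' ++ [e'] := by
  intro l
  induction l with
  | nil =>
    intro q hq
    have : q = single e he := Subtype.ext hq
    exact ⟨[], by rw [this, hsingle]; rfl⟩
  | cons e₀ l ih =>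
    intro q hq
    have hpq : (G.parent u q).1 = l ++ [e] := by
      rw [parent_val, hq]; rfl
    obtain ⟨l'', h''⟩ := ih _ hpq
    rw [hpar, parent_val] at h''
    have hlen' : ((F q).1).length = l.length + 2 := by
      rw [hlen, hq]; simp
    cases hFq : (F q).1 with
    | nil => rw [hFq] at hlen'; simp at hlen'
    | cons a rest =>
      refine ⟨a :: l'', ?_⟩
      rw [hFq] at h''
      simp only [List.tail_cons] at h''
      simp [h'']

theorem subtree_iso (F : G.InPath u ≃ H.InPath v)
    (hlen : ∀ p, ((F p).1).length = (p.1).length)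
    (hpar : ∀ p, F (G.parent u p) = H.parent v (F p))
    {e : G.E} {e' : H.E} (he : G.tgt e = u) (he' : H.tgt e' = v)
    (hsingle : F (single e he) = single e' he') :
    InTreeIso G (G.src e) H (H.src e') := by
  classical
  -- symm data
  have hlen' : ∀ p, ((F.symm p).1).length = (p.1).length := by
    intro p; rw [← hlen (F.symm p), Equiv.apply_symm_apply]
  have hpar' : ∀ p, F.symm (H.parent v p) = G.parent u (F.symm p) := by
    intro p
    apply F.injective
    rw [Equiv.apply_symm_apply, hpar (F.symm p), Equiv.apply_symm_apply]
  have hsingle' : F.symm (single e' he') = single e he := by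
    rw [← hsingle, Equiv.symm_apply_apply]
  -- the append maps
  set A : G.InPath (G.src e) → G.InPath u :=
    fun p => ⟨p.1 ++ [e], (isInPath_append e he p.1).mpr p.2⟩ with hA
  set A' : H.InPath (H.src e') → H.InPath v :=
    fun p => ⟨p.1 ++ [e'], (isInPath_append e' he' p.1).mpr p.2⟩ with hA'
  have hAinj : Function.Injective A := by
    intro p q h
    apply Subtype.ext
    have := congrArg Subtype.val h
    simpa [hA] using this
  have hA'inj : Function.Injective A' := by
    intro p q h
    apply Subtype.ext
    have := congrArg Subtype.val h
    simpa [hA'] using this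
  -- forward map
  have hToP : ∀ p : G.InPath (G.src e),
      H.IsInPath (H.src e') ((F (A p)).1.dropLast) ∧ (F (A p)).1.dropLast ++ [e'] = (F (A p)).1 := by
    intro p
    obtain ⟨l', hl'⟩ := endsWith_map F hlen hpar he he' hsingle p.1 (A p) rfl
    rw [hl', List.dropLast_concat]
    exact ⟨(isInPath_append e' he' l').mp (hl' ▸ (F (A p)).2), rfl⟩
  have hToP' : ∀ p : H.InPath (H.src e'),
      G.IsInPath (G.src e) ((F.symm (A' p)).1.dropLast) ∧
        (F.symm (A' p)).1.dropLast ++ [e] = (F.symm (A' p)).1 := by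
    intro p
    obtain ⟨l', hl'⟩ := endsWith_map F.symm hlen' hpar' he' he hsingle' p.1 (A' p) rfl
    rw [hl', List.dropLast_concat]
    exact ⟨(isInPath_append e he l').mp (hl' ▸ (F.symm (A' p)).2), rfl⟩
  set T : G.InPath (G.src e) → H.InPath (H.src e') :=
    fun p => ⟨(F (A p)).1.dropLast, (hToP p).1⟩ with hT
  set T' : H.InPath (H.src e') → G.InPath (G.src e) :=
    fun p => ⟨(F.symm (A' p)).1.dropLast, (hToP' p).1⟩ with hT'
  have hAT : ∀ p, A' (T p) = F (A p) := fun p => Subtype.ext (hToP p).2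
  have hAT' : ∀ p, A (T' p) = F.symm (A' p) := fun p => Subtype.ext (hToP' p).2
  have hleft : ∀ p, T' (T p) = p := by
    intro p
    apply hAinj
    rw [hAT', hAT, Equiv.symm_apply_apply]
  have hright : ∀ p, T (T' p) = p := by
    intro p
    apply hA'inj
    rw [hAT, hAT', Equiv.apply_symm_apply]
  refine ⟨⟨T, T', hleft, hright⟩, ?_, ?_, ?_⟩
  · -- root
    apply Subtype.ext
    have hAr : A (G.root (G.src e)) = single e he := Subtype.ext rfl
    show (F (A (G.root (G.src e)))).1.dropLast = []
    rw [hAr, hsingle]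
    rfl
  · -- length
    intro p
    show (F (A p)).1.dropLast.length = p.1.length
    rw [List.length_dropLast, hlen]
    simp [hA]
  · -- parent
    intro p
    apply Subtype.ext
    show (F (A (G.parent _ p))).1.dropLast = (H.parent _ (T p)).1
    rw [parent_val]
    show _ = ((F (A p)).1.dropLast).tail
    rw [List.tail_dropLast]
    rcases hp : p.1 with _ | ⟨e₀, l⟩
    · -- p is the root
      have hpp : G.parent (G.src e) p = p := by
        apply Subtype.ext; rw [parent_val, hp]; rfl
      rw [hpp]
      have hAp : A p = single e he := Subtype.ext (by simp [hA, hp, single])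
      rw [hAp, hsingle]
      rfl
    · have : A (G.parent (G.src e) p) = G.parent u (A p) := by
        apply Subtype.ext
        show (G.parent _ p).1 ++ [e] = (G.parent u (A p)).1
        rw [parent_val, parent_val]
        show p.1.tail ++ [e] = (p.1 ++ [e]).tail
        rw [hp]
        rfl
      rw [this, hpar, parent_val]

theorem edge_equiv (hiso : InTreeIso G u H v) :
    ∃ Φ : {e : G.E // G.tgt e = u} ≃ {e : H.E // H.tgt e = v},
      ∀ e, InTreeIso G (G.src e.1) H (H.src (Φ e).1) := by
  classical
  obtain ⟨F, hroot, hlen, hpar⟩ := hiso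
  have hlen' : ∀ p, ((F.symm p).1).length = (p.1).length := by
    intro p; rw [← hlen (F.symm p), Equiv.apply_symm_apply]
  have hpar' : ∀ p, F.symm (H.parent v p) = G.parent u (F.symm p) := by
    intro p
    apply F.injective
    rw [Equiv.apply_symm_apply, hpar (F.symm p), Equiv.apply_symm_apply]
  -- forward edge map
  have exF : ∀ e : {e : G.E // G.tgt e = u},
      ∃ e' : {e' : H.E // H.tgt e' = v}, F (single e.1 e.2) = single e'.1 e'.2 := by
    intro e
    have h1 : ((F (single e.1 e.2)).1).length = 1 := by rw [hlen]; rfl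
    obtain ⟨a, ha⟩ := List.length_eq_one_iff.mp h1
    have hv : H.tgt a = v := by
      have := (F (single e.1 e.2)).2
      rw [ha] at this
      exact this.2
    exact ⟨⟨a, hv⟩, Subtype.ext ha⟩
  have exF' : ∀ e' : {e' : H.E // H.tgt e' = v},
      ∃ e : {e : G.E // G.tgt e = u}, F.symm (single e'.1 e'.2) = single e.1 e.2 := by
    intro e'
    have h1 : ((F.symm (single e'.1 e'.2)).1).length = 1 := by rw [hlen']; rfl
    obtain ⟨a, ha⟩ := List.length_eq_one_iff.mp h1
    have hv : G.tgt a = u := by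
      have := (F.symm (single e'.1 e'.2)).2
      rw [ha] at this
      exact this.2
    exact ⟨⟨a, hv⟩, Subtype.ext ha⟩
  choose φ hφ using exF
  choose φ' hφ' using exF'
  have hl : ∀ e, φ' (φ e) = e := by
    intro e
    have : F.symm (single (φ e).1 (φ e).2) = single e.1 e.2 := by
      rw [← hφ e, Equiv.symm_apply_apply]
    apply Subtype.ext
    have := (hφ' (φ e)).symm.trans this
    have := congrArg Subtype.val this
    simpa [single] using this
  have hr : ∀ e', φ (φ' e') = e' := by
    intro e'
    have : F (single (φ' e').1 (φ' e').2) = single e'.1 e'.2 := by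
      rw [← hφ' e', Equiv.apply_symm_apply]
    apply Subtype.ext
    have := (hφ (φ' e')).symm.trans this
    have := congrArg Subtype.val this
    simpa [single] using this
  exact ⟨⟨φ, φ', hl, hr⟩,
    fun e => subtree_iso F hlen hpar e.2 (φ e).2 (hφ e)⟩

theorem map_filter_equiv {α β : Type*} [Fintype α] {P Q : α → Prop}
    [DecidablePred P] [DecidablePred Q]
    (Φ : {a // P a} ≃ {a // Q a}) {g g' : α → β}
    (hg : ∀ a : {a // P a}, g a.1 = g' (Φ a).1) :
    (Finset.univ.filter P).val.map g = (Finset.univ.filter Q).val.map g' := by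
  have h1 : Finset.univ.filter P =
      Finset.map (Function.Embedding.subtype P) Finset.univ := by
    ext a; simp
  have h2 : Finset.univ.filter Q =
      Finset.map (Function.Embedding.subtype Q) Finset.univ := by
    ext a; simp
  rw [h1, h2, Finset.map_val, Finset.map_val, Multiset.map_map, Multiset.map_map,
    ← Finset.map_univ_equiv Φ, Finset.map_val, Multiset.map_map]
  exact Multiset.map_congr rfl (fun a _ => hg a)

end FinDigraph

/-- in a GNN with layer update
`h (k+1) u = γ (h k u) (f (multiset of in-neighbor features))`, nodes in the same fiber
(isomorphic input trees) have synchronized features at every layer, provided the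
initial features are constant on fibers. -/
theorem gnn_fiber_synchronization (G : FinDigraph) (S A : Type)
    (γ : S → A → S) (f : Multiset S → A) (h : ℕ → G.V → S)
    (hdyn : ∀ k u, h (k + 1) u = γ (h k u) (f (FinDigraph.inStates G (h k) u)))
    (hinit : ∀ u v, FinDigraph.fibEquiv G u v → h 0 u = h 0 v) :
    ∀ k u v, FinDigraph.fibEquiv G u v → h k u = h k v := by
  intro k
  induction k with
  | zero => exact hinit
  | succ k ih =>
    intro u v huv
    rw [hdyn, hdyn, ih u v huv]
    obtain ⟨Φ, hΦ⟩ := FinDigraph.edge_equiv huv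
    have : FinDigraph.inStates G (h k) u = FinDigraph.inStates G (h k) v := by
      letI := Fintype.ofFinite G.E
      letI := Classical.decEq G.V
      simp only [FinDigraph.inStates]
      exact FinDigraph.map_filter_equiv Φ (fun e => ih _ _ (hΦ e))
    rw [this]
end
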